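/- Let R be an artinian Gorenstein ℂ-algebra with dim_ℂ R = k, let M be a finitely generated R-module, and let W ⊆ M be a ℂ-linear subspace such that for every R-submodule N ⊆ M with dim_ℂ(M/N) ≤ k the composite map W → M → M/N is surjective. Then W = M. -/
import Mathlib

open Module LinearMap

lemma aux_exists_phi
    (R : Type*) [CommRing R] [Algebra ℂ R] [FiniteDimensional ℂ R]
    (lam : R →ₗ[ℂ] ℂ)
    (hGor : ∀ a : R, (∀ b : R, lam (a * b) = 0) → a = 0)
    (M : Type*) [AddCommGroup M] [Module R M] [Module ℂ M] [IsScalarTower ℂ R M]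
    (f : M →ₗ[ℂ] ℂ) :
    ∃ φ : M →ₗ[R] R, ∀ m : M, lam (φ m) = f m := by
  let e : R →ₗ[ℂ] Module.Dual ℂ R := (LinearMap.mul ℂ R).compr₂ lam
  have he : ∀ a b : R, e a b = lam (a * b) := fun a b => rfl
  have hinj : Function.Injective e := by
    rw [injective_iff_map_eq_zero]
    intro a ha
    exact hGor a fun b => by
      have := congrArg (fun g : Module.Dual ℂ R => g b) ha
      simpa [he] using this
  have hsurj : Function.Surjective e :=
    (LinearMap.injective_iff_surjective_of_finrank_eq_finrank
      (by rw [Subspace.dual_finrank_eq])).mp hinj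
  let E : R ≃ₗ[ℂ] Module.Dual ℂ R := LinearEquiv.ofBijective e ⟨hinj, hsurj⟩
  let T : M → Module.Dual ℂ R :=
    fun m => f ∘ₗ ((LinearMap.toSpanSingleton R M m).restrictScalars ℂ)
  have hT : ∀ (m : M) (r : R), T m r = f (r • m) := fun m r => rfl
  let g : M → R := fun m => E.symm (T m)
  have hg : ∀ (m : M) (r : R), lam (g m * r) = f (r • m) := by
    intro m r
    have : e (g m) = T m := E.apply_symm_apply (T m)
    have := congrArg (fun h : Module.Dual ℂ R => h r) this
    simpa [he, hT] using this
  have hadd : ∀ m m' : M, g (m + m') = g m + g m' := by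
    intro m m'
    apply hinj
    ext r
    simp only [he, map_add, add_mul, LinearMap.add_apply]
    rw [hg, hg, hg, smul_add, map_add]
  have hsmul : ∀ (r : R) (m : M), g (r • m) = r * g m := by
    intro r m
    apply hinj
    ext b
    simp only [he]
    rw [hg, mul_comm r (g m), mul_assoc, hg, smul_smul, mul_comm b r]
  refine ⟨{ toFun := g, map_add' := hadd, map_smul' := hsmul }, fun m => ?_⟩
  have := hg m 1
  simpa using this

/-- **Statement 19.**
Let `R` be an artinian Gorenstein `ℂ`-algebra with `dim_ℂ R = k` (Gorenstein is
expressed, as in the context, by the existence of a `ℂ`-linear functional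
`lam : R → ℂ` for which the pairing `(a, b) ↦ lam (a * b)` is nondegenerate),
let `M` be a finitely generated `R`-module, and let `W ⊆ M` be a `ℂ`-linear
subspace such that for every `R`-submodule `N ⊆ M` with `dim_ℂ (M / N) ≤ k`
the composite `W → M → M / N` is surjective.  Then `W = M`. -/
theorem statement19
    (R : Type*) [CommRing R] [Algebra ℂ R] [FiniteDimensional ℂ R]
    (k : ℕ) (hk : Module.finrank ℂ R = k)
    (lam : R →ₗ[ℂ] ℂ)
    (hGor : ∀ a : R, (∀ b : R, lam (a * b) = 0) → a = 0)
    (M : Type*) [AddCommGroup M] [Module R M] [Module ℂ M] [IsScalarTower ℂ R M]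
    [Module.Finite R M]
    (W : Submodule ℂ M)
    (hW : ∀ N : Submodule R M, Module.finrank ℂ (M ⧸ N) ≤ k →
      ∀ m : M, ∃ w ∈ W,
        (Submodule.Quotient.mk w : M ⧸ N) = Submodule.Quotient.mk m) :
    W = ⊤ := by
  haveI : Module.Finite ℂ M := Module.Finite.trans R M
  by_contra hne
  have : ∃ m : M, m ∉ W := by
    by_contra h
    push_neg at h
    exact hne (eq_top_iff.mpr fun x _ => h x)
  obtain ⟨m, hm⟩ := this
  have hqm : (W.mkQ m : M ⧸ W) ≠ 0 := by
    simpa [Submodule.Quotient.mk_eq_zero] using hm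
  obtain ⟨g0, hg0⟩ : ∃ g0 : Module.Dual ℂ (M ⧸ W), g0 (W.mkQ m) ≠ 0 := by
    by_contra h
    push_neg at h
    exact hqm ((Module.forall_dual_apply_eq_zero_iff ℂ _).mp h)
  obtain ⟨φ, hφ⟩ := aux_exists_phi R lam hGor M (g0 ∘ₗ W.mkQ)
  set N := LinearMap.ker φ with hN
  have hdim : Module.finrank ℂ (M ⧸ N) ≤ k := by
    have e1 : Module.finrank ℂ (M ⧸ N) = Module.finrank ℂ (LinearMap.range φ) :=
      (φ.quotKerEquivRange.restrictScalars ℂ).finrank_eq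
    have e2 : Module.finrank ℂ ((LinearMap.range φ).restrictScalars ℂ) ≤ Module.finrank ℂ R :=
      Submodule.finrank_le _
    rw [e1, hk] at *
    exact le_trans (le_of_eq rfl) (by rw [← hk]; exact e2)
  obtain ⟨w, hwW, hmk⟩ := hW N hdim m
  have hsub : w - m ∈ N := (Submodule.Quotient.eq N).mp hmk
  have hφeq : φ w = φ m := by
    have := hsub
    rw [hN, LinearMap.mem_ker, map_sub, sub_eq_zero] at this
    exact this
  have h1 : (g0 ∘ₗ W.mkQ) w = 0 := by
    simp [Submodule.mkQ_apply, (Submodule.Quotient.mk_eq_zero W).mpr hwW]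
  have h2 : (g0 ∘ₗ W.mkQ) w = (g0 ∘ₗ W.mkQ) m := by
    rw [← hφ, ← hφ, hφeq]
  exact hg0 (by simpa [Submodule.mkQ_apply] using (h1 ▸ h2).symm)
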